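/- Let (R, m) and (S, n) be Noetherian local rings, let k be a field, and let f : R → k and g : S → k be surjective ring homomorphisms with kernels m and n respectively (so k is a common residue field of R and S). Suppose depth R > 0 and depth S > 0. Then the fiber product A = R ×_k S = {(a, b) ∈ R × S : f(a) = g(b)} is a weakly Arf ring if and only if both R and S are weakly Arf rings. -/

import Mathlib

open scoped TensorProduct

/-- `A` is a *weakly Arf ring*: whenever `x, y, z ∈ A` with `x` a non-zerodivisor on `A`
and the fractions `y/x` and `z/x` in the total ring of fractions `Q(A)` are integral
over `A`, then `y * z ∈ x A`. -/
def IsWeaklyArfRing (A : Type*) [CommRing A] : Prop :=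
  ∀ (x y z : A) (hx : x ∈ nonZeroDivisors A),
    IsIntegral A (IsLocalization.mk' (FractionRing A) y
      (⟨x, hx⟩ : nonZeroDivisors A)) →
    IsIntegral A (IsLocalization.mk' (FractionRing A) z
      (⟨x, hx⟩ : nonZeroDivisors A)) →
    y * z ∈ Ideal.span {x}

/-- `xs` is a regular sequence on `R`: for each `i`, the element `xs i` acts injectively
on `R / (xs 0, …, xs (i-1))`. -/
def IsRegularSeq (R : Type*) [CommRing R] (xs : List R) : Prop :=
  ∀ (i : ℕ) (h : i < xs.length),
    IsSMulRegular (R ⧸ Ideal.span {y : R | y ∈ xs.take i}) (xs.get ⟨i, h⟩)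

/-- For a Noetherian local ring `R`, `depth R ≥ n` holds iff there is a regular sequence
of length `n` consisting of elements of the maximal ideal. -/
def RingDepthGE (R : Type*) [CommRing R] [IsLocalRing R] (n : ℕ) : Prop :=
  ∃ xs : List R, xs.length = n ∧ (∀ x ∈ xs, x ∈ IsLocalRing.maximalIdeal R) ∧
    IsRegularSeq R xs

section Helpers

lemma exists_nzd_of_depth {R : Type*} [CommRing R] [IsLocalRing R] (h : RingDepthGE R 1) :
    ∃ a, a ∈ IsLocalRing.maximalIdeal R ∧ a ∈ nonZeroDivisors R := by
  obtain ⟨xs, hlen, hmem, hreg⟩ := h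
  have h0 : 0 < xs.length := by omega
  set a := xs.get ⟨0, h0⟩ with ha
  refine ⟨a, hmem _ (xs.get_mem _), ?_⟩
  have hr := hreg 0 h0
  set I : Ideal R := Ideal.span {y : R | y ∈ xs.take 0} with hIdef
  have hI : I = ⊥ := by
    rw [hIdef]
    convert Ideal.span_empty
    simp
  rw [mem_nonZeroDivisors_iff_right]
  intro z hz
  have h1 : a • (Ideal.Quotient.mk I z) = a • (Ideal.Quotient.mk I 0) := by
    simp only [← Ideal.Quotient.mk_eq_mk, ← Submodule.Quotient.mk_smul, smul_eq_mul,
      mul_comm a z, hz, mul_zero]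
  have h2 := hr h1
  have h3 : z ∈ I := by
    rw [map_zero] at h2
    exact (Ideal.Quotient.eq_zero_iff_mem).mp h2
  rw [hI] at h3
  simpa using h3

lemma mem_maximalIdeal_of_integral_mul {R : Type*} [CommRing R] [IsLocalRing R]
    {x r : R} {γ : FractionRing R} (hx : x ∈ IsLocalRing.maximalIdeal R)
    (hγ : IsIntegral R γ)
    (h : algebraMap R (FractionRing R) r = algebraMap R (FractionRing R) x * γ) :
    r ∈ IsLocalRing.maximalIdeal R := by
  by_contra hr
  have hru : IsUnit r := by
    by_contra hcon
    exact hr hcon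
  obtain ⟨u, hu⟩ := hru.exists_right_inv
  set B := Algebra.adjoin R {γ} with hB
  have hfg : B.toSubmodule.FG := hγ.fg_adjoin_singleton
  have hle : B.toSubmodule ≤ (IsLocalRing.maximalIdeal R) • B.toSubmodule := by
    intro ζ hζ
    have hζB : ζ ∈ B := hζ
    have key : ζ = x • (ζ * γ * algebraMap R (FractionRing R) u) := by
      rw [Algebra.smul_def]
      have : algebraMap R (FractionRing R) x * (ζ * γ * algebraMap R (FractionRing R) u)
          = ζ * (algebraMap R (FractionRing R) x * γ) * algebraMap R (FractionRing R) u := by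
        ring
      rw [this, ← h, mul_assoc, ← map_mul, hu, map_one, mul_one]
    rw [key]
    refine Submodule.smul_mem_smul hx ?_
    exact B.mul_mem (B.mul_mem hζB (Algebra.self_mem_adjoin_singleton R γ)) (B.algebraMap_mem u)
  have hbot := Submodule.eq_bot_of_le_smul_of_le_jacobson_bot (IsLocalRing.maximalIdeal R)
    B.toSubmodule hfg hle
    (by rw [IsLocalRing.jacobson_eq_maximalIdeal ⊥ bot_ne_top])
  have h1 : (1 : FractionRing R) ∈ B.toSubmodule := B.one_mem
  rw [hbot] at h1
  have : (1 : FractionRing R) = 0 := h1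
  have h10 : (1 : R) = 0 := by
    apply IsFractionRing.injective R (FractionRing R)
    rw [map_one, map_zero, this]
  exact one_ne_zero h10

open Polynomial in
lemma isIntegral_pair_left {A' R FR T : Type*} [CommRing A'] [CommRing R] [Nontrivial R]
    [CommRing FR] [CommRing T] [Algebra A' (FR × T)] (ρ : R →+* FR)
    (hlift : ∀ r : R, ∃ u : A', (algebraMap A' (FR × T) u).1 = ρ r)
    {α : FR} (hα : ρ.IsIntegralElem α) :
    IsIntegral A' ((α, 0) : FR × T) := by
  obtain ⟨p, hm, hp⟩ := hα
  choose L hL using hlift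
  set ψ := algebraMap A' (FR × T) with hψ
  set q : R[X] := p * X with hqdef
  have hqm : q.Monic := hm.mul monic_X
  have hq0 : q.coeff 0 = 0 := coeff_mul_X_zero p
  have hqd : q.natDegree = p.natDegree + 1 := natDegree_mul_X hm.ne_zero
  set d := q.natDegree with hd
  have hd1 : 1 ≤ d := by omega
  set s : Polynomial A' := ∑ i ∈ Finset.Ico 1 d, C (L (q.coeff i)) * X ^ i with hs
  set P : Polynomial A' := X ^ d + s with hP
  have hsdeg : s.degree < (d : WithBot ℕ) := by
    refine lt_of_le_of_lt (degree_sum_le _ _) ?_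
    rw [Finset.sup_lt_iff (by exact bot_lt_iff_ne_bot.mpr (by simp))]
    intro i hi
    refine lt_of_le_of_lt (degree_C_mul_X_pow_le _ _) ?_
    exact_mod_cast (Finset.mem_Ico.mp hi).2
  have hPm : P.Monic := monic_X_pow_add hsdeg
  refine ⟨P, hPm, ?_⟩
  have hq0' : eval₂ ρ α q = 0 := by
    rw [hqdef, eval₂_mul, hp, zero_mul]
  have hfst : (RingHom.fst FR T) (eval₂ ψ (α, 0) P) = 0 := by
    rw [hom_eval₂]
    show eval₂ ((RingHom.fst FR T).comp ψ) α P = 0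
    have hτ : ∀ r : R, ((RingHom.fst FR T).comp ψ) (L r) = ρ r := fun r => hL r
    have : eval₂ ((RingHom.fst FR T).comp ψ) α P
        = α ^ d + ∑ i ∈ Finset.Ico 1 d, ρ (q.coeff i) * α ^ i := by
      rw [hP, eval₂_add, eval₂_X_pow, hs, eval₂_finset_sum]
      congr 1
      refine Finset.sum_congr rfl fun i hi => ?_
      rw [eval₂_mul, eval₂_C, eval₂_X_pow, hτ]
    rw [this]
    have hq_eval : eval₂ ρ α q = α ^ d + ∑ i ∈ Finset.Ico 1 d, ρ (q.coeff i) * α ^ i := by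
      rw [eval₂_eq_sum_range' ρ (show q.natDegree < d + 1 by omega) α]
      rw [Finset.sum_range_succ]
      have hld : q.coeff d = 1 := hqm.coeff_natDegree
      rw [hld, map_one, one_mul]
      rw [Finset.range_eq_Ico, Finset.sum_eq_sum_Ico_succ_bot hd1]
      rw [hq0, map_zero, zero_mul, zero_add, add_comm]
    rw [← hq_eval, hq0']
  have hsnd : (RingHom.snd FR T) (eval₂ ψ (α, 0) P) = 0 := by
    rw [hom_eval₂]
    show eval₂ ((RingHom.snd FR T).comp ψ) (0 : T) P = 0
    have h2 : eval₂ ((RingHom.snd FR T).comp ψ) (0 : T) P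
        = ((RingHom.snd FR T).comp ψ) (P.coeff 0) := by rw [eval₂_at_zero]
    have hP0 : P.coeff 0 = 0 := by
      rw [hP, coeff_add, coeff_X_pow, if_neg (by omega), hs, finset_sum_coeff]
      rw [zero_add]
      refine Finset.sum_eq_zero fun i hi => ?_
      rw [coeff_C_mul, coeff_X_pow,
        if_neg (by have := (Finset.mem_Ico.mp hi).1; omega), mul_zero]
    rw [h2, hP0, map_zero]
  exact Prod.ext hfst hsnd

open Polynomial in
lemma isIntegral_pair_right {A' R T FS : Type*} [CommRing A'] [CommRing R] [Nontrivial R]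
    [CommRing T] [CommRing FS] [Algebra A' (T × FS)] (ρ : R →+* FS)
    (hlift : ∀ r : R, ∃ u : A', (algebraMap A' (T × FS) u).2 = ρ r)
    {α : FS} (hα : ρ.IsIntegralElem α) :
    IsIntegral A' ((0, α) : T × FS) := by
  obtain ⟨p, hm, hp⟩ := hα
  choose L hL using hlift
  set ψ := algebraMap A' (T × FS) with hψ
  set q : R[X] := p * X with hqdef
  have hqm : q.Monic := hm.mul monic_X
  have hq0 : q.coeff 0 = 0 := coeff_mul_X_zero p
  have hqd : q.natDegree = p.natDegree + 1 := natDegree_mul_X hm.ne_zero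
  set d := q.natDegree with hd
  have hd1 : 1 ≤ d := by omega
  set s : Polynomial A' := ∑ i ∈ Finset.Ico 1 d, C (L (q.coeff i)) * X ^ i with hs
  set P : Polynomial A' := X ^ d + s with hP
  have hsdeg : s.degree < (d : WithBot ℕ) := by
    refine lt_of_le_of_lt (degree_sum_le _ _) ?_
    rw [Finset.sup_lt_iff (by exact bot_lt_iff_ne_bot.mpr (by simp))]
    intro i hi
    refine lt_of_le_of_lt (degree_C_mul_X_pow_le _ _) ?_
    exact_mod_cast (Finset.mem_Ico.mp hi).2
  have hPm : P.Monic := monic_X_pow_add hsdeg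
  refine ⟨P, hPm, ?_⟩
  have hq0' : eval₂ ρ α q = 0 := by
    rw [hqdef, eval₂_mul, hp, zero_mul]
  have hsnd : (RingHom.snd T FS) (eval₂ ψ ((0, α) : T × FS) P) = 0 := by
    rw [hom_eval₂]
    show eval₂ ((RingHom.snd T FS).comp ψ) α P = 0
    have hτ : ∀ r : R, ((RingHom.snd T FS).comp ψ) (L r) = ρ r := fun r => hL r
    have : eval₂ ((RingHom.snd T FS).comp ψ) α P
        = α ^ d + ∑ i ∈ Finset.Ico 1 d, ρ (q.coeff i) * α ^ i := by
      rw [hP, eval₂_add, eval₂_X_pow, hs, eval₂_finset_sum]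
      congr 1
      refine Finset.sum_congr rfl fun i hi => ?_
      rw [eval₂_mul, eval₂_C, eval₂_X_pow, hτ]
    rw [this]
    have hq_eval : eval₂ ρ α q = α ^ d + ∑ i ∈ Finset.Ico 1 d, ρ (q.coeff i) * α ^ i := by
      rw [eval₂_eq_sum_range' ρ (show q.natDegree < d + 1 by omega) α]
      rw [Finset.sum_range_succ]
      have hld : q.coeff d = 1 := hqm.coeff_natDegree
      rw [hld, map_one, one_mul]
      rw [Finset.range_eq_Ico, Finset.sum_eq_sum_Ico_succ_bot hd1]
      rw [hq0, map_zero, zero_mul, zero_add, add_comm]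
    rw [← hq_eval, hq0']
  have hfst : (RingHom.fst T FS) (eval₂ ψ ((0, α) : T × FS) P) = 0 := by
    rw [hom_eval₂]
    show eval₂ ((RingHom.fst T FS).comp ψ) (0 : T) P = 0
    have h2 : eval₂ ((RingHom.fst T FS).comp ψ) (0 : T) P
        = ((RingHom.fst T FS).comp ψ) (P.coeff 0) := by rw [eval₂_at_zero]
    have hP0 : P.coeff 0 = 0 := by
      rw [hP, coeff_add, coeff_X_pow, if_neg (by omega), hs, finset_sum_coeff]
      rw [zero_add]
      refine Finset.sum_eq_zero fun i hi => ?_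
      rw [coeff_C_mul, coeff_X_pow,
        if_neg (by have := (Finset.mem_Ico.mp hi).1; omega), mul_zero]
    rw [h2, hP0, map_zero]
  exact Prod.ext hfst hsnd

end Helpers

set_option maxHeartbeats 2000000 in
/-- Let `(R, m)` and `(S, n)` be Noetherian local rings with a common residue field
`k` (via surjections `f : R → k`, `g : S → k` with kernels `m` and `n`), and suppose
`depth R > 0` and `depth S > 0`.  Then the fiber product
`A = R ×_k S = {(a, b) : f a = g b}` is weakly Arf iff both `R` and `S` are. -/
theorem weaklyArf_fiberProduct (R S k : Type*) [CommRing R] [CommRing S] [Field k]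
    [IsNoetherianRing R] [IsNoetherianRing S] [IsLocalRing R] [IsLocalRing S]
    (f : R →+* k) (g : S →+* k)
    (hf : Function.Surjective f) (hg : Function.Surjective g)
    (hkf : RingHom.ker f = IsLocalRing.maximalIdeal R)
    (hkg : RingHom.ker g = IsLocalRing.maximalIdeal S)
    (hdR : RingDepthGE R 1) (hdS : RingDepthGE S 1) :
    IsWeaklyArfRing
        (RingHom.eqLocus (f.comp (RingHom.fst R S)) (g.comp (RingHom.snd R S))) ↔
      (IsWeaklyArfRing R ∧ IsWeaklyArfRing S) := by
  classical
  set A := RingHom.eqLocus (f.comp (RingHom.fst R S)) (g.comp (RingHom.snd R S)) with hAdef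
  set FR := FractionRing R with hFRdef
  set FS := FractionRing S with hFSdef
  set K := FR × FS with hKdef
  -- basic data
  obtain ⟨a, ham, hanz⟩ := exists_nzd_of_depth hdR
  obtain ⟨b, hbn, hbnz⟩ := exists_nzd_of_depth hdS
  have hfa : f a = 0 := by rw [← RingHom.mem_ker, hkf]; exact ham
  have hgb : g b = 0 := by rw [← RingHom.mem_ker, hkg]; exact hbn
  -- sections of f and g
  set lR : k → R := fun c => if c = 0 then 0 else Function.surjInv hf c with hlR
  set lS : k → S := fun c => if c = 0 then 0 else Function.surjInv hg c with hlS
  have hsecR : ∀ c : k, f (lR c) = c := by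
    intro c
    by_cases hc : c = 0
    · simp [hlR, hc]
    · simp only [hlR, if_neg hc]
      exact Function.surjInv_eq hf c
  have hsecS : ∀ c : k, g (lS c) = c := by
    intro c
    by_cases hc : c = 0
    · simp [hlS, hc]
    · simp only [hlS, if_neg hc]
      exact Function.surjInv_eq hg c
  -- membership in A
  have hmemA : ∀ u : R × S, u ∈ A ↔ f u.1 = g u.2 := fun u => Iff.rfl
  have hA2 : ∀ u : A, f (u : R × S).1 = g (u : R × S).2 := fun u => u.2
  -- coordinates of non-zerodivisors
  have W2R : ∀ v : A, v ∈ nonZeroDivisors A → (v : R × S).1 ∈ nonZeroDivisors R := by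
    intro v hv
    rw [mem_nonZeroDivisors_iff_right]
    intro z hz
    have hmem : ((z * a, 0) : R × S) ∈ A := by
      rw [hmemA]
      show f (z * a) = g 0
      rw [map_mul, hfa, mul_zero, map_zero]
    have hu0 : (⟨(z * a, 0), hmem⟩ : A) * v = 0 := by
      apply Subtype.ext
      show ((z * a, 0) : R × S) * (v : R × S) = 0
      have : (z * a) * (v : R × S).1 = 0 := by
        have : (z * a) * (v : R × S).1 = (z * (v : R × S).1) * a := by ring
        rw [this, hz, zero_mul]
      exact Prod.ext this (zero_mul _)
    have := (mem_nonZeroDivisors_iff_right.mp hv) _ hu0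
    have hza : z * a = 0 := congrArg (fun t : A => (t : R × S).1) this
    exact (mem_nonZeroDivisors_iff_right.mp hanz) z hza
  have W2S : ∀ v : A, v ∈ nonZeroDivisors A → (v : R × S).2 ∈ nonZeroDivisors S := by
    intro v hv
    rw [mem_nonZeroDivisors_iff_right]
    intro z hz
    have hmem : ((0, z * b) : R × S) ∈ A := by
      rw [hmemA]
      show f 0 = g (z * b)
      rw [map_mul, hgb, mul_zero, map_zero]
    have hu0 : (⟨(0, z * b), hmem⟩ : A) * v = 0 := by
      apply Subtype.ext
      show ((0, z * b) : R × S) * (v : R × S) = 0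
      have h2 : (z * b) * (v : R × S).2 = 0 := by
        have : (z * b) * (v : R × S).2 = (z * (v : R × S).2) * b := by ring
        rw [this, hz, zero_mul]
      exact Prod.ext (zero_mul _) h2
    have := (mem_nonZeroDivisors_iff_right.mp hv) _ hu0
    have hzb : z * b = 0 := congrArg (fun t : A => (t : R × S).2) this
    exact (mem_nonZeroDivisors_iff_right.mp hbnz) z hzb
  have W1 : ∀ u : A, (u : R × S).1 ∈ nonZeroDivisors R → (u : R × S).2 ∈ nonZeroDivisors S →
      u ∈ nonZeroDivisors A := by
    intro u h1 h2
    rw [mem_nonZeroDivisors_iff_right]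
    intro w hw
    have hw' : (w : R × S) * (u : R × S) = 0 := by
      have := congrArg (fun t : A => (t : R × S)) hw
      exact this
    apply Subtype.ext
    refine Prod.ext ?_ ?_
    · exact (mem_nonZeroDivisors_iff_right.mp h1) _ (congrArg Prod.fst hw')
    · exact (mem_nonZeroDivisors_iff_right.mp h2) _ (congrArg Prod.snd hw')
  -- algebra structure on K over A
  letI : Algebra A K := RingHom.toAlgebra
    (((algebraMap R FR).prodMap (algebraMap S FS)).comp (Subring.subtype A))
  have halg : ∀ u : A, algebraMap A K u
      = (algebraMap R FR (u : R × S).1, algebraMap S FS (u : R × S).2) := fun u => rfl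
  letI hloc : IsLocalization (nonZeroDivisors A) K := by
    refine ⟨?_, ?_, ?_⟩
    · rintro ⟨v, hv⟩
      have h1 := IsLocalization.map_units FR ⟨(v : R × S).1, W2R v hv⟩
      have h2 := IsLocalization.map_units FS ⟨(v : R × S).2, W2S v hv⟩
      obtain ⟨u1, hu1⟩ := h1.exists_right_inv
      obtain ⟨u2, hu2⟩ := h2.exists_right_inv
      exact IsUnit.of_mul_eq_one (u1, u2) (Prod.ext hu1 hu2)
    · intro ζ
      obtain ⟨⟨p, q⟩, hpq⟩ := IsLocalization.surj (nonZeroDivisors R) ζ.1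
      obtain ⟨⟨u, v⟩, huv⟩ := IsLocalization.surj (nonZeroDivisors S) ζ.2
      have hNmem : ((p * a, u * b) : R × S) ∈ A := by
        rw [hmemA]
        show f (p * a) = g (u * b)
        rw [map_mul, map_mul, hfa, hgb, mul_zero, mul_zero]
      have hDmem : (((q : R) * a, (v : S) * b) : R × S) ∈ A := by
        rw [hmemA]
        show f ((q : R) * a) = g ((v : S) * b)
        rw [map_mul, map_mul, hfa, hgb, mul_zero, mul_zero]
      have hDnz : (⟨((q : R) * a, (v : S) * b), hDmem⟩ : A) ∈ nonZeroDivisors A := by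
        apply W1
        · exact mul_mem q.2 hanz
        · exact mul_mem v.2 hbnz
      refine ⟨⟨⟨(p * a, u * b), hNmem⟩, ⟨_, hDnz⟩⟩, ?_⟩
      show ζ * algebraMap A K ⟨((q : R) * a, (v : S) * b), hDmem⟩
        = algebraMap A K ⟨(p * a, u * b), hNmem⟩
      rw [halg, halg]
      refine Prod.ext ?_ ?_
      · show ζ.1 * algebraMap R FR ((q : R) * a) = algebraMap R FR (p * a)
        rw [map_mul, ← mul_assoc, hpq, ← map_mul]
      · show ζ.2 * algebraMap S FS ((v : S) * b) = algebraMap S FS (u * b)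
        rw [map_mul, ← mul_assoc, huv, ← map_mul]
    · intro x y h
      refine ⟨1, ?_⟩
      have hx1 : algebraMap R FR (x : R × S).1 = algebraMap R FR (y : R × S).1 := by
        have := congrArg Prod.fst h
        exact this
      have hx2 : algebraMap S FS (x : R × S).2 = algebraMap S FS (y : R × S).2 := by
        have := congrArg Prod.snd h
        exact this
      have : x = y := by
        apply Subtype.ext
        exact Prod.ext (IsFractionRing.injective R FR hx1) (IsFractionRing.injective S FS hx2)
      rw [this]
  -- the equivalence between FractionRing A and K
  set e : FractionRing A ≃ₐ[A] K := IsLocalization.algEquiv (nonZeroDivisors A)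
    (FractionRing A) K with hedef
  have hcome : ((e : FractionRing A →+* K)).comp (algebraMap A (FractionRing A))
      = algebraMap A K := RingHom.ext fun u => e.commutes u
  have hcome' : ((e.symm : K →+* FractionRing A)).comp (algebraMap A K)
      = algebraMap A (FractionRing A) := RingHom.ext fun u => e.symm.commutes u
  have etrans : ∀ w : FractionRing A, IsIntegral A w ↔ IsIntegral A (e w) := by
    intro w
    constructor
    · rintro ⟨P, Pm, Pe⟩
      refine ⟨P, Pm, ?_⟩
      rw [← hcome]
      show Polynomial.eval₂ ((e : FractionRing A →+* K).comp (algebraMap A (FractionRing A)))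
        ((e : FractionRing A →+* K) w) P = 0
      rw [← Polynomial.hom_eval₂, Pe, map_zero]
    · rintro ⟨P, Pm, Pe⟩
      refine ⟨P, Pm, ?_⟩
      have h2 : Polynomial.eval₂ (algebraMap A (FractionRing A)) (e.symm (e w)) P = 0 := by
        rw [← hcome']
        show Polynomial.eval₂ ((e.symm : K →+* FractionRing A).comp (algebraMap A K))
          ((e.symm : K →+* FractionRing A) (e w)) P = 0
        rw [← Polynomial.hom_eval₂, Pe, map_zero]
      rwa [AlgEquiv.symm_apply_apply] at h2
  have hmk : ∀ (Y X : A) (hX : X ∈ nonZeroDivisors A),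
      (IsLocalization.mk' K Y (⟨X, hX⟩ : nonZeroDivisors A) : K)
        = (IsLocalization.mk' FR (Y : R × S).1 ⟨(X : R × S).1, W2R X hX⟩,
           IsLocalization.mk' FS (Y : R × S).2 ⟨(X : R × S).2, W2S X hX⟩) := by
    intro Y X hX
    symm
    rw [IsLocalization.eq_mk'_iff_mul_eq]
    rw [halg]
    refine Prod.ext ?_ ?_
    · show IsLocalization.mk' FR (Y : R × S).1 ⟨(X : R × S).1, W2R X hX⟩
          * algebraMap R FR (X : R × S).1 = algebraMap R FR (Y : R × S).1
      exact IsLocalization.mk'_spec FR _ _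
    · show IsLocalization.mk' FS (Y : R × S).2 ⟨(X : R × S).2, W2S X hX⟩
          * algebraMap S FS (X : R × S).2 = algebraMap S FS (Y : R × S).2
      exact IsLocalization.mk'_spec FS _ _
  -- projections of integral elements
  have proj : ∀ ζ : K, IsIntegral A ζ → IsIntegral R ζ.1 ∧ IsIntegral S ζ.2 := by
    intro ζ hζ
    obtain ⟨P, Pm, Pe⟩ := hζ
    constructor
    · refine ⟨P.map ((RingHom.fst R S).comp (Subring.subtype A)), Pm.map _, ?_⟩
      rw [Polynomial.eval₂_map]
      have hcomp : (algebraMap R FR).comp ((RingHom.fst R S).comp (Subring.subtype A))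
          = (RingHom.fst FR FS).comp (algebraMap A K) := rfl
      rw [hcomp]
      have h3 := Polynomial.hom_eval₂ P (algebraMap A K) (RingHom.fst FR FS) ζ
      show Polynomial.eval₂ ((RingHom.fst FR FS).comp (algebraMap A K))
        ((RingHom.fst FR FS) ζ) P = 0
      rw [← h3, Pe, map_zero]
    · refine ⟨P.map ((RingHom.snd R S).comp (Subring.subtype A)), Pm.map _, ?_⟩
      rw [Polynomial.eval₂_map]
      have hcomp : (algebraMap S FS).comp ((RingHom.snd R S).comp (Subring.subtype A))
          = (RingHom.snd FR FS).comp (algebraMap A K) := rfl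
      rw [hcomp]
      have h3 := Polynomial.hom_eval₂ P (algebraMap A K) (RingHom.snd FR FS) ζ
      show Polynomial.eval₂ ((RingHom.snd FR FS).comp (algebraMap A K))
        ((RingHom.snd FR FS) ζ) P = 0
      rw [← h3, Pe, map_zero]
  -- embedding of componentwise integral elements
  have emb : ∀ ζ : K, IsIntegral R ζ.1 → IsIntegral S ζ.2 → IsIntegral A ζ := by
    intro ζ h1 h2
    have e1 : IsIntegral A ((ζ.1, 0) : K) := by
      refine isIntegral_pair_left (algebraMap R FR) ?_ h1
      intro r
      refine ⟨⟨(r, lS (f r)), ?_⟩, rfl⟩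
      rw [hmemA]
      show f r = g (lS (f r))
      rw [hsecS]
    have e2 : IsIntegral A ((0, ζ.2) : K) := by
      refine isIntegral_pair_right (algebraMap S FS) ?_ h2
      intro s
      refine ⟨⟨(lR (g s), s), ?_⟩, rfl⟩
      rw [hmemA]
      show f (lR (g s)) = g s
      rw [hsecR]
    have : ζ = ((ζ.1, 0) : K) + ((0, ζ.2) : K) := by
      refine Prod.ext ?_ ?_ <;> simp
    rw [this]
    exact e1.add e2
  -- the main integrality transfer
  have hint : ∀ (Y X : A) (hX : X ∈ nonZeroDivisors A),
      IsIntegral A (IsLocalization.mk' (FractionRing A) Y (⟨X, hX⟩ : nonZeroDivisors A)) ↔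
        (IsIntegral R (IsLocalization.mk' FR (Y : R × S).1 ⟨(X : R × S).1, W2R X hX⟩) ∧
         IsIntegral S (IsLocalization.mk' FS (Y : R × S).2 ⟨(X : R × S).2, W2S X hX⟩)) := by
    intro Y X hX
    rw [etrans]
    rw [IsLocalization.algEquiv_mk']
    rw [hmk Y X hX]
    constructor
    · intro h
      exact proj _ h
    · rintro ⟨h1, h2⟩
      exact emb _ h1 h2
  constructor
  · -- A weakly Arf → R and S weakly Arf
    intro hWA
    constructor
    · intro x y z hx hy hz
      by_cases hfx : f x = 0
      · -- x in the maximal ideal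
        have hxm : x ∈ IsLocalRing.maximalIdeal R := by rw [← hkf]; exact hfx
        have hym : y ∈ IsLocalRing.maximalIdeal R := by
          refine mem_maximalIdeal_of_integral_mul hxm hy ?_
          exact (IsLocalization.mk'_spec' FR y ⟨x, hx⟩).symm
        have hzm : z ∈ IsLocalRing.maximalIdeal R := by
          refine mem_maximalIdeal_of_integral_mul hxm hz ?_
          exact (IsLocalization.mk'_spec' FR z ⟨x, hx⟩).symm
        have hfy : f y = 0 := by rw [← hkf] at hym; exact hym
        have hfz : f z = 0 := by rw [← hkf] at hzm; exact hzm
        have hXmem : ((x, b) : R × S) ∈ A := by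
          rw [hmemA]; show f x = g b; rw [hfx, hgb]
        have hYmem : ((y, 0) : R × S) ∈ A := by
          rw [hmemA]; show f y = g 0; rw [hfy, map_zero]
        have hZmem : ((z, 0) : R × S) ∈ A := by
          rw [hmemA]; show f z = g 0; rw [hfz, map_zero]
        set X : A := ⟨(x, b), hXmem⟩
        set Y : A := ⟨(y, 0), hYmem⟩
        set Z : A := ⟨(z, 0), hZmem⟩
        have hX : X ∈ nonZeroDivisors A := W1 X hx hbnz
        have hYint : IsIntegral A
            (IsLocalization.mk' (FractionRing A) Y (⟨X, hX⟩ : nonZeroDivisors A)) := by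
          rw [hint Y X hX]
          constructor
          · exact hy
          · show IsIntegral S (IsLocalization.mk' FS (0 : S) ⟨b, W2S X hX⟩)
            rw [IsLocalization.mk'_zero]
            exact isIntegral_zero
        have hZint : IsIntegral A
            (IsLocalization.mk' (FractionRing A) Z (⟨X, hX⟩ : nonZeroDivisors A)) := by
          rw [hint Z X hX]
          constructor
          · exact hz
          · show IsIntegral S (IsLocalization.mk' FS (0 : S) ⟨b, W2S X hX⟩)
            rw [IsLocalization.mk'_zero]
            exact isIntegral_zero
        have hmem := hWA X Y Z hX hYint hZint
        obtain ⟨c, hc⟩ := Ideal.mem_span_singleton'.mp hmem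
        have hc' : (c : R × S) * (X : R × S) = (Y : R × S) * (Z : R × S) :=
          congrArg (fun t : A => (t : R × S)) hc
        have hc1 : (c : R × S).1 * x = y * z := congrArg Prod.fst hc'
        exact Ideal.mem_span_singleton'.mpr ⟨(c : R × S).1, hc1⟩
      · -- x not in the maximal ideal: use a unit lift
        set x₂ := lS (f x) with hx2def
        have hgx2 : g x₂ = f x := hsecS (f x)
        have hx2u : IsUnit x₂ := by
          by_contra hcon
          have : x₂ ∈ IsLocalRing.maximalIdeal S := hcon
          rw [← hkg] at this
          rw [RingHom.mem_ker] at this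
          rw [this] at hgx2
          exact hfx hgx2.symm
        have hx2nz : x₂ ∈ nonZeroDivisors S := hx2u.mem_nonZeroDivisors
        obtain ⟨u, hu⟩ := hx2u.exists_right_inv
        have hXmem : ((x, x₂) : R × S) ∈ A := by
          rw [hmemA]; show f x = g x₂; rw [hgx2]
        have hYmem : ((y, lS (f y)) : R × S) ∈ A := by
          rw [hmemA]; show f y = g (lS (f y)); rw [hsecS]
        have hZmem : ((z, lS (f z)) : R × S) ∈ A := by
          rw [hmemA]; show f z = g (lS (f z)); rw [hsecS]
        set X : A := ⟨(x, x₂), hXmem⟩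
        set Y : A := ⟨(y, lS (f y)), hYmem⟩
        set Z : A := ⟨(z, lS (f z)), hZmem⟩
        have hX : X ∈ nonZeroDivisors A := W1 X hx hx2nz
        have hSint : ∀ w : S, IsIntegral S (IsLocalization.mk' FS w ⟨x₂, W2S X hX⟩) := by
          intro w
          have : IsLocalization.mk' FS w (⟨x₂, W2S X hX⟩ : nonZeroDivisors S)
              = algebraMap S FS (w * u) := by
            symm
            rw [IsLocalization.eq_mk'_iff_mul_eq]
            rw [← map_mul]
            congr 1
            rw [mul_assoc, mul_comm u x₂, hu, mul_one]
          rw [this]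
          exact isIntegral_algebraMap
        have hYint : IsIntegral A
            (IsLocalization.mk' (FractionRing A) Y (⟨X, hX⟩ : nonZeroDivisors A)) := by
          rw [hint Y X hX]
          exact ⟨hy, hSint _⟩
        have hZint : IsIntegral A
            (IsLocalization.mk' (FractionRing A) Z (⟨X, hX⟩ : nonZeroDivisors A)) := by
          rw [hint Z X hX]
          exact ⟨hz, hSint _⟩
        have hmem := hWA X Y Z hX hYint hZint
        obtain ⟨c, hc⟩ := Ideal.mem_span_singleton'.mp hmem
        have hc' : (c : R × S) * (X : R × S) = (Y : R × S) * (Z : R × S) :=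
          congrArg (fun t : A => (t : R × S)) hc
        have hc1 : (c : R × S).1 * x = y * z := congrArg Prod.fst hc'
        exact Ideal.mem_span_singleton'.mpr ⟨(c : R × S).1, hc1⟩
    · intro x y z hx hy hz
      by_cases hgx : g x = 0
      · have hxm : x ∈ IsLocalRing.maximalIdeal S := by rw [← hkg]; exact hgx
        have hym : y ∈ IsLocalRing.maximalIdeal S := by
          refine mem_maximalIdeal_of_integral_mul hxm hy ?_
          exact (IsLocalization.mk'_spec' FS y ⟨x, hx⟩).symm
        have hzm : z ∈ IsLocalRing.maximalIdeal S := by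
          refine mem_maximalIdeal_of_integral_mul hxm hz ?_
          exact (IsLocalization.mk'_spec' FS z ⟨x, hx⟩).symm
        have hgy : g y = 0 := by rw [← hkg] at hym; exact hym
        have hgz : g z = 0 := by rw [← hkg] at hzm; exact hzm
        have hXmem : ((a, x) : R × S) ∈ A := by
          rw [hmemA]; show f a = g x; rw [hfa, hgx]
        have hYmem : ((0, y) : R × S) ∈ A := by
          rw [hmemA]; show f 0 = g y; rw [hgy, map_zero]
        have hZmem : ((0, z) : R × S) ∈ A := by
          rw [hmemA]; show f 0 = g z; rw [hgz, map_zero]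
        set X : A := ⟨(a, x), hXmem⟩
        set Y : A := ⟨(0, y), hYmem⟩
        set Z : A := ⟨(0, z), hZmem⟩
        have hX : X ∈ nonZeroDivisors A := W1 X hanz hx
        have hYint : IsIntegral A
            (IsLocalization.mk' (FractionRing A) Y (⟨X, hX⟩ : nonZeroDivisors A)) := by
          rw [hint Y X hX]
          constructor
          · show IsIntegral R (IsLocalization.mk' FR (0 : R) ⟨a, W2R X hX⟩)
            rw [IsLocalization.mk'_zero]
            exact isIntegral_zero
          · exact hy
        have hZint : IsIntegral A
            (IsLocalization.mk' (FractionRing A) Z (⟨X, hX⟩ : nonZeroDivisors A)) := by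
          rw [hint Z X hX]
          constructor
          · show IsIntegral R (IsLocalization.mk' FR (0 : R) ⟨a, W2R X hX⟩)
            rw [IsLocalization.mk'_zero]
            exact isIntegral_zero
          · exact hz
        have hmem := hWA X Y Z hX hYint hZint
        obtain ⟨c, hc⟩ := Ideal.mem_span_singleton'.mp hmem
        have hc' : (c : R × S) * (X : R × S) = (Y : R × S) * (Z : R × S) :=
          congrArg (fun t : A => (t : R × S)) hc
        have hc2 : (c : R × S).2 * x = y * z := congrArg Prod.snd hc'
        exact Ideal.mem_span_singleton'.mpr ⟨(c : R × S).2, hc2⟩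
      · set x₁ := lR (g x) with hx1def
        have hfx1 : f x₁ = g x := hsecR (g x)
        have hx1u : IsUnit x₁ := by
          by_contra hcon
          have : x₁ ∈ IsLocalRing.maximalIdeal R := hcon
          rw [← hkf] at this
          rw [RingHom.mem_ker] at this
          rw [this] at hfx1
          exact hgx hfx1.symm
        have hx1nz : x₁ ∈ nonZeroDivisors R := hx1u.mem_nonZeroDivisors
        obtain ⟨u, hu⟩ := hx1u.exists_right_inv
        have hXmem : ((x₁, x) : R × S) ∈ A := by
          rw [hmemA]; show f x₁ = g x; rw [hfx1]
        have hYmem : ((lR (g y), y) : R × S) ∈ A := by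
          rw [hmemA]; show f (lR (g y)) = g y; rw [hsecR]
        have hZmem : ((lR (g z), z) : R × S) ∈ A := by
          rw [hmemA]; show f (lR (g z)) = g z; rw [hsecR]
        set X : A := ⟨(x₁, x), hXmem⟩
        set Y : A := ⟨(lR (g y), y), hYmem⟩
        set Z : A := ⟨(lR (g z), z), hZmem⟩
        have hX : X ∈ nonZeroDivisors A := W1 X hx1nz hx
        have hRint : ∀ w : R, IsIntegral R (IsLocalization.mk' FR w ⟨x₁, W2R X hX⟩) := by
          intro w
          have : IsLocalization.mk' FR w (⟨x₁, W2R X hX⟩ : nonZeroDivisors R)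
              = algebraMap R FR (w * u) := by
            symm
            rw [IsLocalization.eq_mk'_iff_mul_eq]
            rw [← map_mul]
            congr 1
            rw [mul_assoc, mul_comm u x₁, hu, mul_one]
          rw [this]
          exact isIntegral_algebraMap
        have hYint : IsIntegral A
            (IsLocalization.mk' (FractionRing A) Y (⟨X, hX⟩ : nonZeroDivisors A)) := by
          rw [hint Y X hX]
          exact ⟨hRint _, hy⟩
        have hZint : IsIntegral A
            (IsLocalization.mk' (FractionRing A) Z (⟨X, hX⟩ : nonZeroDivisors A)) := by
          rw [hint Z X hX]
          exact ⟨hRint _, hz⟩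
        have hmem := hWA X Y Z hX hYint hZint
        obtain ⟨c, hc⟩ := Ideal.mem_span_singleton'.mp hmem
        have hc' : (c : R × S) * (X : R × S) = (Y : R × S) * (Z : R × S) :=
          congrArg (fun t : A => (t : R × S)) hc
        have hc2 : (c : R × S).2 * x = y * z := congrArg Prod.snd hc'
        exact Ideal.mem_span_singleton'.mpr ⟨(c : R × S).2, hc2⟩
  · -- R and S weakly Arf → A weakly Arf
    rintro ⟨hWR, hWS⟩ X Y Z hX hY hZ
    obtain ⟨hYR, hYS⟩ := (hint Y X hX).mp hY
    obtain ⟨hZR, hZS⟩ := (hint Z X hX).mp hZ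
    set x₁ := (X : R × S).1 with hx1
    set x₂ := (X : R × S).2 with hx2
    set y₁ := (Y : R × S).1 with hy1
    set y₂ := (Y : R × S).2 with hy2
    set z₁ := (Z : R × S).1 with hz1
    set z₂ := (Z : R × S).2 with hz2
    have hx1nz : x₁ ∈ nonZeroDivisors R := W2R X hX
    have hx2nz : x₂ ∈ nonZeroDivisors S := W2S X hX
    obtain ⟨r, hr⟩ := Ideal.mem_span_singleton'.mp (hWR x₁ y₁ z₁ hx1nz hYR hZR)
    obtain ⟨s, hs⟩ := Ideal.mem_span_singleton'.mp (hWS x₂ y₂ z₂ hx2nz hYS hZS)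
    have hXA : f x₁ = g x₂ := hA2 X
    have hYA : f y₁ = g y₂ := hA2 Y
    have hZA : f z₁ = g z₂ := hA2 Z
    have hrs : f r = g s := by
      by_cases hfx1 : f x₁ = 0
      · -- both components in the maximal ideals
        have hx1m : x₁ ∈ IsLocalRing.maximalIdeal R := by rw [← hkf]; exact hfx1
        have hgx2 : g x₂ = 0 := by rw [← hXA]; exact hfx1
        have hx2m : x₂ ∈ IsLocalRing.maximalIdeal S := by rw [← hkg]; exact hgx2
        have hrm : r ∈ IsLocalRing.maximalIdeal R := by
          refine mem_maximalIdeal_of_integral_mul hx1m (hYR.mul hZR) ?_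
          have hux : IsUnit (algebraMap R FR x₁) := IsLocalization.map_units FR ⟨x₁, hx1nz⟩
          apply hux.mul_right_cancel
          rw [mul_assoc]
          have h1 : algebraMap R FR x₁
              * (IsLocalization.mk' FR y₁ ⟨x₁, hx1nz⟩ * IsLocalization.mk' FR z₁ ⟨x₁, hx1nz⟩)
              * algebraMap R FR x₁
              = (IsLocalization.mk' FR y₁ ⟨x₁, hx1nz⟩ * algebraMap R FR x₁)
              * (IsLocalization.mk' FR z₁ ⟨x₁, hx1nz⟩ * algebraMap R FR x₁) := by ring
          rw [← mul_assoc, h1, IsLocalization.mk'_spec, IsLocalization.mk'_spec]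
          rw [← map_mul, ← map_mul, ← hr]
        have hsm : s ∈ IsLocalRing.maximalIdeal S := by
          refine mem_maximalIdeal_of_integral_mul hx2m (hYS.mul hZS) ?_
          have hux : IsUnit (algebraMap S FS x₂) := IsLocalization.map_units FS ⟨x₂, hx2nz⟩
          apply hux.mul_right_cancel
          rw [mul_assoc]
          have h1 : algebraMap S FS x₂
              * (IsLocalization.mk' FS y₂ ⟨x₂, hx2nz⟩ * IsLocalization.mk' FS z₂ ⟨x₂, hx2nz⟩)
              * algebraMap S FS x₂
              = (IsLocalization.mk' FS y₂ ⟨x₂, hx2nz⟩ * algebraMap S FS x₂)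
              * (IsLocalization.mk' FS z₂ ⟨x₂, hx2nz⟩ * algebraMap S FS x₂) := by ring
          rw [← mul_assoc, h1, IsLocalization.mk'_spec, IsLocalization.mk'_spec]
          rw [← map_mul, ← map_mul, ← hs]
        have hfr : f r = 0 := by rw [← hkf] at hrm; exact hrm
        have hgs : g s = 0 := by rw [← hkg] at hsm; exact hsm
        rw [hfr, hgs]
      · -- cancel f x₁ ≠ 0 in the field k
        have : f r * f x₁ = g s * f x₁ := by
          rw [← map_mul, hr, map_mul, hYA, hZA, hXA, ← map_mul, ← map_mul, ← hs]
        exact mul_right_cancel₀ hfx1 this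
    have hcm : ((r, s) : R × S) ∈ A := by rw [hmemA]; exact hrs
    refine Ideal.mem_span_singleton'.mpr ⟨⟨(r, s), hcm⟩, ?_⟩
    apply Subtype.ext
    show ((r, s) : R × S) * (X : R × S) = (Y : R × S) * (Z : R × S)
    refine Prod.ext ?_ ?_
    · exact hr
    · exact hs
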